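/- Define y : (−1,1) → ℝ by y(x) = Σ_{k=0}^∞ ((2k choose k)/4^k)² · x^{2k}. Then y is twice differentiable on (−1,1) and satisfies the differential equation (x³ − x)·y''(x) + (3x² − 1)·y'(x) + x·y(x) = 0 for all x with |x| < 1. -/

import Mathlib

/-- The hypergeometric-type series `y(x) = ∑ ((2k choose k)/4^k)² x^{2k}`. -/
noncomputable def gaussSeries (x : ℝ) : ℝ :=
  ∑' k : ℕ, (((2 * k).choose k : ℝ) / 4 ^ k) ^ 2 * x ^ (2 * k)

namespace GaussODE

noncomputable def a (k : ℕ) : ℝ := (((2 * k).choose k : ℝ) / 4 ^ k) ^ 2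

lemma a_nonneg (k : ℕ) : 0 ≤ a k := sq_nonneg _

lemma choose_le (k : ℕ) : ((2 * k).choose k : ℝ) ≤ 4 ^ k := by
  have h : (2 * k).choose k ≤ 2 ^ (2 * k) :=
    (Finset.single_le_sum (f := fun i => (2 * k).choose i)
      (fun i _ => Nat.zero_le _) (Finset.mem_range.2 (by omega))).trans_eq
      (Nat.sum_range_choose (2 * k))
  have : (2:ℕ) ^ (2 * k) = 4 ^ k := by rw [pow_mul]; norm_num
  exact_mod_cast this ▸ h

lemma a_le_one (k : ℕ) : a k ≤ 1 := by
  have h4 : (0:ℝ) < 4 ^ k := by positivity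
  have h1 := choose_le k
  have h2 : (((2 * k).choose k : ℝ) / 4 ^ k) ≤ 1 := by
    rw [div_le_one h4]; exact h1
  have h0 : (0:ℝ) ≤ (((2 * k).choose k : ℝ) / 4 ^ k) := by positivity
  calc a k = (((2 * k).choose k : ℝ) / 4 ^ k) ^ 2 := rfl
  _ ≤ 1 ^ 2 := by gcongr
  _ = 1 := one_pow 2

lemma key (k : ℕ) : a (k + 1) * (2 * (k:ℝ) + 2) ^ 2 = a k * (2 * (k:ℝ) + 1) ^ 2 := by
  have h : ((k:ℕ) + 1) * ((2 * (k + 1)).choose (k + 1)) = 2 * (2 * k + 1) * ((2 * k).choose k) := by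
    simpa [Nat.centralBinom] using Nat.succ_mul_centralBinom_succ k
  have hc : ((2 * (k + 1)).choose (k + 1) : ℝ) * (2 * (k:ℝ) + 2)
      = 4 * (2 * (k:ℝ) + 1) * ((2 * k).choose k : ℝ) := by
    have := congrArg (fun n : ℕ => (n : ℝ)) h
    push_cast at this
    nlinarith [this]
  have h4 : (4:ℝ) ^ (k + 1) = 4 * 4 ^ k := by ring
  calc a (k + 1) * (2 * (k:ℝ) + 2) ^ 2
      = (((2 * (k + 1)).choose (k + 1) : ℝ) * (2 * (k:ℝ) + 2) / 4 ^ (k + 1)) ^ 2 := by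
        rw [a]; ring
    _ = ((4 * ((2 * (k:ℝ) + 1) * ((2 * k).choose k : ℝ))) / (4 * 4 ^ k)) ^ 2 := by
        rw [hc, h4]; ring_nf
    _ = (((2 * (k:ℝ) + 1) * ((2 * k).choose k : ℝ)) / 4 ^ k) ^ 2 := by
        rw [mul_div_mul_left _ _ (by norm_num : (4:ℝ) ≠ 0)]
    _ = a k * (2 * (k:ℝ) + 1) ^ 2 := by rw [a]; ring

lemma summable_poly {q : ℝ} (h0 : 0 ≤ q) (h1 : q < 1) (b c d : ℝ) :
    Summable (fun k : ℕ => (b * (k:ℝ) ^ 2 + c * k + d) * q ^ k) := by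
  have h1' : ‖q‖ < 1 := by rwa [Real.norm_eq_abs, abs_of_nonneg h0]
  have h2 := summable_pow_mul_geometric_of_norm_lt_one (R := ℝ) 2 h1'
  have hk1 := summable_pow_mul_geometric_of_norm_lt_one (R := ℝ) 1 h1'
  have hg := summable_geometric_of_lt_one h0 h1
  exact (((h2.mul_left b).add (hk1.mul_left c)).add (hg.mul_left d)).congr
    (fun k => by ring)

noncomputable def g0 (k : ℕ) (z : ℝ) : ℝ := a k * z ^ (2 * k)
noncomputable def g1 (k : ℕ) (z : ℝ) : ℝ := a k * (2 * k : ℕ) * z ^ (2 * k - 1)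
noncomputable def g2 (k : ℕ) (z : ℝ) : ℝ :=
  a k * (2 * k : ℕ) * (2 * k - 1 : ℕ) * z ^ (2 * k - 2)

lemma hd0 (k : ℕ) (z : ℝ) : HasDerivAt (g0 k) (g1 k z) z := by
  rw [show g0 k = fun y => a k * y ^ (2 * k) from rfl]
  simpa [g0, g1, mul_assoc] using HasDerivAt.const_mul (a k) (hasDerivAt_pow (2 * k) z)

lemma hd1 (k : ℕ) (z : ℝ) : HasDerivAt (g1 k) (g2 k z) z := by
  have e : 2 * k - 1 - 1 = 2 * k - 2 := by omega
  have h := HasDerivAt.const_mul (a k * ((2 * k : ℕ) : ℝ)) (hasDerivAt_pow (2 * k - 1) z)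
  rw [e] at h
  have hv : g2 k z
      = a k * ((2 * k : ℕ) : ℝ) * (((2 * k - 1 : ℕ) : ℝ) * z ^ (2 * k - 2)) := by
    rw [g2]; ring
  rw [hv]
  exact h

lemma bound0 {r : ℝ} (k : ℕ) {y : ℝ} (hy : |y| ≤ r) :
    ‖g0 k y‖ ≤ (r ^ 2) ^ k := by
  have hr0 : 0 ≤ r := (abs_nonneg y).trans hy
  calc ‖g0 k y‖ = a k * |y| ^ (2 * k) := by
        rw [g0, Real.norm_eq_abs, abs_mul, abs_pow, abs_of_nonneg (a_nonneg _)]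
    _ ≤ 1 * r ^ (2 * k) := by gcongr; exact a_le_one k
    _ = (r ^ 2) ^ k := by rw [one_mul, ← pow_mul]

lemma bound1 {r : ℝ} (hr0 : 0 < r) (k : ℕ) {y : ℝ} (hy : |y| ≤ r) :
    ‖g1 k y‖ ≤ 2 / r * k * (r ^ 2) ^ k := by
  rcases k with _ | n
  · simp [g1]
  · have e : 2 * (n + 1) - 1 = 2 * n + 1 := by omega
    calc ‖g1 (n + 1) y‖ = a (n + 1) * ((2 * (n:ℝ) + 2) * |y| ^ (2 * n + 1)) := by
          rw [g1, e, Real.norm_eq_abs, abs_mul, abs_mul, abs_pow,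
            abs_of_nonneg (a_nonneg _), Nat.abs_cast]
          push_cast; ring
      _ ≤ 1 * ((2 * (n:ℝ) + 2) * r ^ (2 * n + 1)) := by
          gcongr <;> first | exact a_le_one _ | exact hy | positivity
      _ = 2 / r * ((n:ℝ) + 1) * (r ^ 2) ^ (n + 1) := by
          rw [← pow_mul]; field_simp; ring
      _ = 2 / r * ((n + 1 : ℕ) : ℝ) * (r ^ 2) ^ (n + 1) := by push_cast; ring

lemma bound2 {r : ℝ} (hr0 : 0 < r) (k : ℕ) {y : ℝ} (hy : |y| ≤ r) :
    ‖g2 k y‖ ≤ 4 / r ^ 2 * (k:ℝ) ^ 2 * (r ^ 2) ^ k := by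
  rcases k with _ | n
  · simp [g2]
  · have e1 : 2 * (n + 1) - 1 = 2 * n + 1 := by omega
    have e2 : 2 * (n + 1) - 2 = 2 * n := by omega
    calc ‖g2 (n + 1) y‖
        = a (n + 1) * ((2 * (n:ℝ) + 2) * ((2 * (n:ℝ) + 1) * |y| ^ (2 * n))) := by
          rw [g2, e1, e2, Real.norm_eq_abs, abs_mul, abs_mul, abs_mul, abs_pow,
            abs_of_nonneg (a_nonneg _), Nat.abs_cast, Nat.abs_cast]
          push_cast; ring
      _ ≤ 1 * ((2 * (n:ℝ) + 2) * ((2 * (n:ℝ) + 2) * r ^ (2 * n))) := by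
          gcongr <;> first | exact a_le_one _ | exact hy | linarith | positivity
      _ = 4 / r ^ 2 * ((n:ℝ) + 1) ^ 2 * (r ^ 2) ^ (n + 1) := by
          rw [← pow_mul]; field_simp; ring
      _ = 4 / r ^ 2 * (((n + 1 : ℕ) : ℝ)) ^ 2 * (r ^ 2) ^ (n + 1) := by push_cast; ring

noncomputable def A (x : ℝ) (k : ℕ) : ℝ := a k * (2 * (k:ℝ) + 1) ^ 2 * x ^ (2 * k + 1)
noncomputable def B (x : ℝ) (k : ℕ) : ℝ := a k * (2 * (k:ℝ)) ^ 2 * x ^ (2 * k - 1)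

lemma boundA {r : ℝ} (hr1 : r ≤ 1) (k : ℕ) {x : ℝ} (hx : |x| ≤ r) :
    ‖A x k‖ ≤ (4 * (k:ℝ) ^ 2 + 4 * k + 1) * (r ^ 2) ^ k := by
  have hr0 : 0 ≤ r := (abs_nonneg x).trans hx
  calc ‖A x k‖ = a k * ((2 * (k:ℝ) + 1) ^ 2 * |x| ^ (2 * k + 1)) := by
        rw [A, Real.norm_eq_abs, abs_mul, abs_mul, abs_pow, abs_pow,
          abs_of_nonneg (a_nonneg _),
          abs_of_nonneg (by positivity : (0:ℝ) ≤ 2 * (k:ℝ) + 1)]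
        ring
    _ ≤ 1 * ((2 * (k:ℝ) + 1) ^ 2 * r ^ (2 * k + 1)) := by
        gcongr <;> first | exact a_le_one _ | exact hx | positivity
    _ ≤ 1 * ((2 * (k:ℝ) + 1) ^ 2 * r ^ (2 * k)) := by
        have hpow : r ^ (2 * k + 1) ≤ r ^ (2 * k) := pow_le_pow_of_le_one hr0 hr1 (by omega)
        have h2 : (0:ℝ) ≤ (2 * (k:ℝ) + 1) ^ 2 := by positivity
        nlinarith [hpow, h2]
    _ = (4 * (k:ℝ) ^ 2 + 4 * k + 1) * (r ^ 2) ^ k := by rw [← pow_mul]; ring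


end GaussODE

open GaussODE

theorem gaussSeries_satisfies_ode :
    ∀ x : ℝ, |x| < 1 →
      DifferentiableAt ℝ gaussSeries x ∧
      DifferentiableAt ℝ (deriv gaussSeries) x ∧
      (x ^ 3 - x) * deriv (deriv gaussSeries) x +
        (3 * x ^ 2 - 1) * deriv gaussSeries x + x * gaussSeries x = 0 := by
  intro x hx
  set r : ℝ := (1 + |x|) / 2 with hr_def
  have hxr : |x| < r := by rw [hr_def]; linarith
  have hr0 : 0 < r := lt_of_le_of_lt (abs_nonneg x) hxr
  have hr1 : r < 1 := by rw [hr_def]; linarith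
  have hq0 : (0:ℝ) ≤ r ^ 2 := by positivity
  have hq1 : r ^ 2 < 1 := by nlinarith
  set t : Set ℝ := Set.Ioo (-r) r with ht_def
  have ht : IsOpen t := isOpen_Ioo
  have htc : IsPreconnected t := (convex_Ioo _ _).isPreconnected
  have habs : ∀ y ∈ t, |y| ≤ r := by
    intro y hy
    exact le_of_lt (abs_lt.2 ⟨hy.1, hy.2⟩)
  have hxt : x ∈ t := by
    rcases abs_lt.1 hxr with ⟨h1, h2⟩; exact ⟨h1, h2⟩
  have h0t : (0:ℝ) ∈ t := ⟨by linarith, hr0⟩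
  -- summable bounds
  have su0 : Summable (fun k : ℕ => (r ^ 2) ^ k) := summable_geometric_of_lt_one hq0 hq1
  have su1 : Summable (fun k : ℕ => 2 / r * (k:ℝ) * (r ^ 2) ^ k) :=
    (summable_poly hq0 hq1 0 (2 / r) 0).congr (fun k => by ring)
  have su2 : Summable (fun k : ℕ => 4 / r ^ 2 * (k:ℝ) ^ 2 * (r ^ 2) ^ k) :=
    (summable_poly hq0 hq1 (4 / r ^ 2) 0 0).congr (fun k => by ring)
  have suA : Summable (fun k : ℕ => (4 * (k:ℝ) ^ 2 + 4 * k + 1) * (r ^ 2) ^ k) :=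
    summable_poly hq0 hq1 4 4 1
  -- summability of the series at points of t
  have S0 : Summable (fun k => g0 k x) :=
    Summable.of_norm_bounded su0 (fun k => bound0 k (habs x hxt))
  have S1 : Summable (fun k => g1 k x) :=
    Summable.of_norm_bounded su1 (fun k => bound1 hr0 k (habs x hxt))
  have S2 : Summable (fun k => g2 k x) :=
    Summable.of_norm_bounded su2 (fun k => bound2 hr0 k (habs x hxt))
  have S00 : Summable (fun k => g0 k 0) :=
    Summable.of_norm_bounded su0 (fun k => bound0 k (habs 0 h0t))
  have S10 : Summable (fun k => g1 k 0) :=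
    Summable.of_norm_bounded su1 (fun k => bound1 hr0 k (habs 0 h0t))
  -- term-by-term differentiation
  have key1 : ∀ y ∈ t, HasDerivAt (fun z => ∑' k, g0 k z) (∑' k, g1 k y) y := by
    intro y hy
    exact hasDerivAt_tsum_of_isPreconnected su1 ht htc
      (fun k z _ => hd0 k z) (fun k z hz => bound1 hr0 k (habs z hz)) h0t S00 hy
  have key2 : ∀ y ∈ t, HasDerivAt (fun z => ∑' k, g1 k z) (∑' k, g2 k y) y := by
    intro y hy
    exact hasDerivAt_tsum_of_isPreconnected su2 ht htc
      (fun k z _ => hd1 k z) (fun k z hz => bound2 hr0 k (habs z hz)) h0t S10 hy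
  have hg_eq : gaussSeries = fun z => ∑' k, g0 k z := rfl
  have diff1 : DifferentiableAt ℝ gaussSeries x := by
    rw [hg_eq]; exact (key1 x hxt).differentiableAt
  have hderiv1 : ∀ y ∈ t, deriv gaussSeries y = ∑' k, g1 k y := by
    intro y hy
    rw [hg_eq]; exact (key1 y hy).deriv
  have hev : deriv gaussSeries =ᶠ[nhds x] (fun z => ∑' k, g1 k z) :=
    Filter.eventuallyEq_of_mem (ht.mem_nhds hxt) hderiv1
  have diff2 : DifferentiableAt ℝ (deriv gaussSeries) x :=
    hev.differentiableAt_iff.2 (key2 x hxt).differentiableAt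
  have hderiv2 : deriv (deriv gaussSeries) x = ∑' k, g2 k x := by
    rw [hev.deriv_eq]; exact (key2 x hxt).deriv
  refine ⟨diff1, diff2, ?_⟩
  rw [hderiv2, hderiv1 x hxt, show gaussSeries x = ∑' k, g0 k x from rfl]
  -- algebra with the series
  have hFk : ∀ k, (x ^ 3 - x) * g2 k x + (3 * x ^ 2 - 1) * g1 k x + x * g0 k x
      = A x k - B x k := by
    intro k
    rcases k with _ | n
    · simp [g0, g1, g2, A, B]
      ring
    · have e1 : 2 * (n + 1) - 1 = 2 * n + 1 := by omega
      have e2 : 2 * (n + 1) - 2 = 2 * n := by omega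
      rw [g0, g1, g2, A, B, e1, e2]
      push_cast
      ring
  have SF : Summable (fun k => (x ^ 3 - x) * g2 k x + (3 * x ^ 2 - 1) * g1 k x
      + x * g0 k x) := ((S2.mul_left _).add (S1.mul_left _)).add (S0.mul_left _)
  have SA : Summable (fun k => A x k) :=
    Summable.of_norm_bounded suA (fun k => boundA hr1.le k (habs x hxt))
  have SB : Summable (fun k => B x k) :=
    (SA.sub SF).congr (fun k => by rw [hFk k]; ring)
  have hBA : ∑' k, B x k = ∑' k, A x k := by
    rw [Summable.tsum_eq_zero_add SB]
    have hB0 : B x 0 = 0 := by simp [B]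
    rw [hB0, zero_add]
    refine tsum_congr (fun k => ?_)
    have e1 : 2 * (k + 1) - 1 = 2 * k + 1 := by omega
    rw [B, A, e1]
    push_cast
    linear_combination x ^ (2 * k + 1) * key k
  calc (x ^ 3 - x) * ∑' k, g2 k x + (3 * x ^ 2 - 1) * ∑' k, g1 k x + x * ∑' k, g0 k x
      = ∑' k, ((x ^ 3 - x) * g2 k x + (3 * x ^ 2 - 1) * g1 k x + x * g0 k x) := by
        rw [Summable.tsum_add ((S2.mul_left _).add (S1.mul_left _)) (S0.mul_left _),
          Summable.tsum_add (S2.mul_left _) (S1.mul_left _), tsum_mul_left, tsum_mul_left,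
          tsum_mul_left]
    _ = ∑' k, (A x k - B x k) := tsum_congr hFk
    _ = (∑' k, A x k) - ∑' k, B x k := Summable.tsum_sub SA SB
    _ = 0 := by rw [hBA, sub_self]
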